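/- Let n ≥ 2 and let A ∈ M_n(ℂ). If there exists θ ∈ ℝ such that the Hermitian matrix Re(e^{-iθ}A) has exactly two distinct eigenvalues, then k(A) = n. -/

import Mathlib

open Matrix Complex

noncomputable section

/-- The Hermitian part `Re A = (A + A*)/2` of a complex matrix. -/
def reM {n : ℕ} (A : Matrix (Fin n) (Fin n) ℂ) : Matrix (Fin n) (Fin n) ℂ :=
  (2⁻¹ : ℂ) • (A + Aᴴ)

/-- The numerical range `W(A) = {⟨Ax, x⟩ : ‖x‖ = 1}` (here `⟨Ax, x⟩ = x* A x`). -/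
def numRange {n : ℕ} (A : Matrix (Fin n) (Fin n) ℂ) : Set ℂ :=
  {z | ∃ x : Fin n → ℂ, star x ⬝ᵥ x = 1 ∧ star x ⬝ᵥ A.mulVec x = z}

/-- The Gau–Wu number `k(A)`: the maximum cardinality of an orthonormal family whose
quadratic-form values all lie on the boundary of `W(A)`. -/
def gauWu {n : ℕ} (A : Matrix (Fin n) (Fin n) ℂ) : ℕ :=
  sSup {k : ℕ | ∃ f : Fin k → (Fin n → ℂ),
    (∀ i j, star (f i) ⬝ᵥ f j = if i = j then (1 : ℂ) else 0) ∧
    ∀ j, star (f j) ⬝ᵥ A.mulVec (f j) ∈ frontier (numRange A)}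

/-- `A` is unitarily irreducible: no nontrivial proper subspace is invariant under
both `A` and `A*`. -/
def UnitarilyIrreducible {n : ℕ} (A : Matrix (Fin n) (Fin n) ℂ) : Prop :=
  ¬ ∃ L : Submodule ℂ (Fin n → ℂ), 0 < Module.finrank ℂ L ∧ Module.finrank ℂ L < n ∧
      (∀ x ∈ L, A.mulVec x ∈ L) ∧ (∀ x ∈ L, Aᴴ.mulVec x ∈ L)

lemma conj_quadform {n : ℕ} (M : Matrix (Fin n) (Fin n) ℂ) (x : Fin n → ℂ) :
    star x ⬝ᵥ Mᴴ.mulVec x = starRingEnd ℂ (star x ⬝ᵥ M.mulVec x) := by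
  simp only [dotProduct, mulVec, Pi.star_apply, conjTranspose_apply, map_sum, _root_.map_mul,
    Finset.mul_sum, RingHomCompTriple.comp_apply, RingHom.id_apply]
  rw [Finset.sum_comm]
  congr 1; ext i; congr 1; ext j
  simp [mul_comm, mul_left_comm]

lemma reM_isHermitian {n : ℕ} (M : Matrix (Fin n) (Fin n) ℂ) : (reM M).IsHermitian := by
  unfold reM
  simp [Matrix.IsHermitian, conjTranspose_smul, conjTranspose_add, add_comm]

lemma quadform_reM {n : ℕ} (M : Matrix (Fin n) (Fin n) ℂ) (x : Fin n → ℂ) :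
    star x ⬝ᵥ (reM M).mulVec x = (((star x ⬝ᵥ M.mulVec x).re : ℝ) : ℂ) := by
  unfold reM
  rw [smul_mulVec, dotProduct_smul, add_mulVec, dotProduct_add, conj_quadform]
  set z := star x ⬝ᵥ M.mulVec x
  rw [Complex.add_conj, smul_eq_mul]
  push_cast
  ring

lemma re_conj_mul_real_mul (r : ℝ) (z : ℂ) :
    (starRingEnd ℂ z * ((r : ℂ) * z)).re = r * Complex.normSq z := by
  have e : starRingEnd ℂ z * ((r : ℂ) * z) = (r : ℂ) * (z * starRingEnd ℂ z) := by ring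
  rw [e, Complex.mul_conj, ← Complex.ofReal_mul, Complex.ofReal_re]

lemma quadform_bound {n : ℕ} {B : Matrix (Fin n) (Fin n) ℂ} (hB : B.IsHermitian)
    (x : Fin n → ℂ) (hx : star x ⬝ᵥ x = 1) {m M : ℝ}
    (hm : ∀ i, m ≤ hB.eigenvalues i) (hM : ∀ i, hB.eigenvalues i ≤ M) :
    m ≤ (star x ⬝ᵥ B.mulVec x).re ∧ (star x ⬝ᵥ B.mulVec x).re ≤ M := by
  set U := (hB.eigenvectorUnitary : Matrix (Fin n) (Fin n) ℂ) with hU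
  set y := (star U).mulVec x with hy
  have hstary : star y = star x ᵥ* U := by
    rw [hy, star_mulVec, star_eq_conjTranspose, conjTranspose_conjTranspose]
  have hUy : star x ⬝ᵥ B.mulVec x
      = star y ⬝ᵥ (diagonal (RCLike.ofReal ∘ hB.eigenvalues)).mulVec y := by
    conv_lhs => rw [hB.spectral_theorem, Unitary.conjStarAlgAut_apply]
    rw [← Matrix.mulVec_mulVec, ← Matrix.mulVec_mulVec, Matrix.dotProduct_mulVec, ← hstary, hy]
  have hsum : star y ⬝ᵥ y = 1 := by
    rw [hstary, hy, Matrix.dotProduct_mulVec, Matrix.vecMul_vecMul,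
      Matrix.mem_unitaryGroup_iff.mp hB.eigenvectorUnitary.2, Matrix.vecMul_one, hx]
  have hsum' : ∑ i, Complex.normSq (y i) = 1 := by
    have := congrArg Complex.re hsum
    simpa [dotProduct, Complex.normSq_eq_conj_mul_self, Complex.normSq_apply] using this
  have hre : (star x ⬝ᵥ B.mulVec x).re = ∑ i, hB.eigenvalues i * Complex.normSq (y i) := by
    rw [hUy]
    simp only [dotProduct, Matrix.mulVec_diagonal, Pi.star_apply, Function.comp_apply,
      Complex.re_sum, RCLike.ofReal_alg]
    congr 1; ext i
    simpa using re_conj_mul_real_mul (hB.eigenvalues i) (y i)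
  constructor
  · rw [hre]
    calc m = m * ∑ i, Complex.normSq (y i) := by rw [hsum', mul_one]
    _ = ∑ i, m * Complex.normSq (y i) := by rw [Finset.mul_sum]
    _ ≤ ∑ i, hB.eigenvalues i * Complex.normSq (y i) :=
        Finset.sum_le_sum fun i _ => mul_le_mul_of_nonneg_right (hm i) (Complex.normSq_nonneg _)
  · rw [hre]
    calc ∑ i, hB.eigenvalues i * Complex.normSq (y i)
        ≤ ∑ i, M * Complex.normSq (y i) :=
        Finset.sum_le_sum fun i _ => mul_le_mul_of_nonneg_right (hM i) (Complex.normSq_nonneg _)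
    _ = M * ∑ i, Complex.normSq (y i) := by rw [Finset.mul_sum]
    _ = M := by rw [hsum', mul_one]

lemma card_le_of_orthonormal {n k : ℕ} (f : Fin k → (Fin n → ℂ))
    (hf : ∀ i j, star (f i) ⬝ᵥ f j = if i = j then (1 : ℂ) else 0) : k ≤ n := by
  have horth : Orthonormal ℂ (fun i => (WithLp.equiv 2 _).symm (f i) :
      Fin k → EuclideanSpace ℂ (Fin n)) := by
    rw [orthonormal_iff_ite]
    intro i j
    rw [EuclideanSpace.inner_eq_star_dotProduct, dotProduct_comm]
    exact hf i j
  have := horth.linearIndependent.fintype_card_le_finrank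
  simpa [finrank_euclideanSpace_fin] using this

/-- If for some `θ` the Hermitian matrix `Re(e^{-iθ}A)` has exactly two distinct
eigenvalues, then `k(A) = n` (no irreducibility needed). -/
theorem gauWu_eq_dim_of_two_eigenvalues {n : ℕ} (hn : 2 ≤ n)
    (A : Matrix (Fin n) (Fin n) ℂ)
    (h : ∃ θ : ℝ, ∃ α β : ℂ, α ≠ β ∧
        Module.End.HasEigenvalue
          (Matrix.toLin' (reM (Complex.exp (-(θ : ℂ) * Complex.I) • A))) α ∧
        Module.End.HasEigenvalue
          (Matrix.toLin' (reM (Complex.exp (-(θ : ℂ) * Complex.I) • A))) β ∧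
        ∀ μ : ℂ,
          Module.End.HasEigenvalue
            (Matrix.toLin' (reM (Complex.exp (-(θ : ℂ) * Complex.I) • A))) μ →
          μ = α ∨ μ = β) :
    gauWu A = n := by
  classical
  obtain ⟨θ, α, β, hαβ, hα, hβ, hall⟩ := h
  set c := Complex.exp (-(θ : ℂ) * Complex.I) with hc
  set B := reM (c • A) with hBdef
  have hB : B.IsHermitian := reM_isHermitian _
  -- orthonormality of the eigenvector basis as plain vectors
  have horth : ∀ i j, star (⇑(hB.eigenvectorBasis i)) ⬝ᵥ ⇑(hB.eigenvectorBasis j)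
      = if i = j then (1 : ℂ) else 0 := by
    intro i j
    have := orthonormal_iff_ite.mp hB.eigenvectorBasis.orthonormal i j
    rw [EuclideanSpace.inner_eq_star_dotProduct, dotProduct_comm] at this
    exact this
  -- each eigenvalue is α or β
  have heig : ∀ i, ((hB.eigenvalues i : ℝ) : ℂ) = α ∨ ((hB.eigenvalues i : ℝ) : ℂ) = β := by
    intro i
    apply hall
    apply Module.End.hasEigenvalue_of_hasEigenvector (x := ⇑(hB.eigenvectorBasis i))
    constructor
    · rw [Module.End.mem_eigenspace_iff, Matrix.toLin'_apply, hB.mulVec_eigenvectorBasis]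
      ext j
      simp [Complex.real_smul]
    · intro h0
      have h1 := horth i i
      rw [h0] at h1
      simp at h1
  set M : ℝ := max α.re β.re with hMdef
  set m : ℝ := min α.re β.re with hmdef
  have hμ : ∀ i, hB.eigenvalues i = α.re ∨ hB.eigenvalues i = β.re := by
    intro i
    rcases heig i with h1 | h1
    · left; rw [← h1]; simp
    · right; rw [← h1]; simp
  have hMb : ∀ i, hB.eigenvalues i ≤ M := by
    intro i
    rcases hμ i with h1 | h1 <;> rw [h1]
    · exact le_max_left _ _
    · exact le_max_right _ _
  have hmb : ∀ i, m ≤ hB.eigenvalues i := by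
    intro i
    rcases hμ i with h1 | h1 <;> rw [h1]
    · exact min_le_left _ _
    · exact min_le_right _ _
  have hcc : c * starRingEnd ℂ c = 1 := by
    have habs : ‖c‖ = 1 := by rw [hc, Complex.norm_exp]; simp
    rw [Complex.mul_conj, Complex.normSq_eq_norm_sq, habs]
    norm_num
  have habs : ‖c‖ = 1 := by rw [hc, Complex.norm_exp]; simp
  -- quadratic form of B vs real part of c * quadratic form of A
  have hqf : ∀ x : Fin n → ℂ, star x ⬝ᵥ B.mulVec x
      = (((c * (star x ⬝ᵥ A.mulVec x)).re : ℝ) : ℂ) := by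
    intro x
    rw [hBdef, quadform_reM, smul_mulVec, dotProduct_smul, smul_eq_mul]
  have key : ∀ x : Fin n → ℂ, star x ⬝ᵥ x = 1 →
      m ≤ (c * (star x ⬝ᵥ A.mulVec x)).re ∧ (c * (star x ⬝ᵥ A.mulVec x)).re ≤ M := by
    intro x hx
    have h2 := quadform_bound hB x hx hmb hMb
    rw [hqf x] at h2
    simpa using h2
  -- frontier membership
  have hfront : ∀ i, star (⇑(hB.eigenvectorBasis i)) ⬝ᵥ A.mulVec (⇑(hB.eigenvectorBasis i))
      ∈ frontier (numRange A) := by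
    intro i
    set v := ⇑(hB.eigenvectorBasis i) with hv
    have hv1 : star v ⬝ᵥ v = 1 := by simpa using horth i i
    set z := star v ⬝ᵥ A.mulVec v with hz
    have hzmem : z ∈ numRange A := ⟨v, hv1, rfl⟩
    have hFz : (c * z).re = hB.eigenvalues i := by
      have e1 := hB.eigenvalues_eq i
      rw [← hv, hqf v, ← hz] at e1
      rw [e1]
      simp
    have hzMm : (c * z).re = M ∨ (c * z).re = m := by
      rw [hFz]
      rcases hμ i with h1 | h1 <;> rw [h1]
      · rcases le_total α.re β.re with hab | hab
        · right; exact (min_eq_left hab).symm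
        · left; exact (max_eq_left hab).symm
      · rcases le_total α.re β.re with hab | hab
        · left; exact (max_eq_right hab).symm
        · right; exact (min_eq_right hab).symm
    have hni : z ∉ interior (numRange A) := by
      intro hint
      obtain ⟨ε, hε, hball⟩ := Metric.mem_nhds_iff.1 (mem_interior_iff_mem_nhds.1 hint)
      rcases hzMm with hcase | hcase
      · set w := z + ((ε / 2 : ℝ) : ℂ) * starRingEnd ℂ c with hw
        have hwmem : w ∈ numRange A := by
          apply hball
          rw [Metric.mem_ball, Complex.dist_eq]
          have e : w - z = ((ε / 2 : ℝ) : ℂ) * starRingEnd ℂ c := by rw [hw]; ring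
          rw [e, norm_mul, Complex.norm_conj, habs, Complex.norm_real, Real.norm_eq_abs, mul_one,
            abs_of_pos (by linarith)]
          linarith
        obtain ⟨x, hx1, hx2⟩ := hwmem
        have h2 := (key x hx1).2
        rw [hx2] at h2
        have e2 : c * w = c * z + ((ε / 2 : ℝ) : ℂ) * (c * starRingEnd ℂ c) := by
          rw [hw]; ring
        rw [e2, hcc, mul_one, Complex.add_re, hcase, Complex.ofReal_re] at h2
        linarith
      · set w := z - ((ε / 2 : ℝ) : ℂ) * starRingEnd ℂ c with hw
        have hwmem : w ∈ numRange A := by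
          apply hball
          rw [Metric.mem_ball, Complex.dist_eq]
          have e : w - z = -(((ε / 2 : ℝ) : ℂ) * starRingEnd ℂ c) := by rw [hw]; ring
          rw [e, norm_neg, norm_mul, Complex.norm_conj, habs, Complex.norm_real, Real.norm_eq_abs, mul_one,
            abs_of_pos (by linarith)]
          linarith
        obtain ⟨x, hx1, hx2⟩ := hwmem
        have h2 := (key x hx1).1
        rw [hx2] at h2
        have e2 : c * w = c * z - ((ε / 2 : ℝ) : ℂ) * (c * starRingEnd ℂ c) := by
          rw [hw]; ring
        rw [e2, hcc, mul_one, Complex.sub_re, hcase, Complex.ofReal_re] at h2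
        linarith
    exact ⟨subset_closure hzmem, hni⟩
  -- assemble
  have hnS : n ∈ {k : ℕ | ∃ f : Fin k → (Fin n → ℂ),
      (∀ i j, star (f i) ⬝ᵥ f j = if i = j then (1 : ℂ) else 0) ∧
      ∀ j, star (f j) ⬝ᵥ A.mulVec (f j) ∈ frontier (numRange A)} :=
    ⟨fun i => ⇑(hB.eigenvectorBasis i), horth, hfront⟩
  have hbd : ∀ k ∈ {k : ℕ | ∃ f : Fin k → (Fin n → ℂ),
      (∀ i j, star (f i) ⬝ᵥ f j = if i = j then (1 : ℂ) else 0) ∧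
      ∀ j, star (f j) ⬝ᵥ A.mulVec (f j) ∈ frontier (numRange A)}, k ≤ n := by
    rintro k ⟨f, hf, -⟩
    exact card_le_of_orthonormal f hf
  exact le_antisymm (csSup_le ⟨n, hnS⟩ hbd) (le_csSup ⟨n, fun k hk => hbd k hk⟩ hnS)
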